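/- For every connection form ωᴳ adapted to v there exists a unique pair (ωˢ, F) such that ωᴳ = ωˢ + F, where ωˢ is a semi-teleparallel connection form with respect to {v, b₁, b₂, b₃} and F : V → End(V) is linear with each F(u) η-skew, F(u)v = 0 for all u ∈ V, and F(bᵢ) = 0 for i = 1,2,3. Moreover, F is given explicitly by F(u)x = η(v,u) · Σᵢ η(Dᴳbᵢ(v), x)·bᵢ, where Dᴳbᵢ(v) = dbᵢ(v) + ωᴳ(v)bᵢ. -/

import Mathlib

open Finset

/- Minkowski space V = ℝ⁴ with bilinear form η. -/
abbrev V4 := Fin 4 → ℝ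

def eta (x y : V4) : ℝ := -(x 0 * y 0) + x 1 * y 1 + x 2 * y 2 + x 3 * y 3

/-- `f : V → V` is linear. -/
def IsLin (f : V4 → V4) : Prop :=
  (∀ x y, f (x + y) = f x + f y) ∧ ∀ (c : ℝ) (x : V4), f (c • x) = c • f x

/-- `f` is η-skew: η(f x, y) = −η(x, f y). -/
def IsSkew (f : V4 → V4) : Prop := ∀ x y, eta (f x) y = - eta x (f y)

/-- A connection form: a linear map `ω : V → End V` with each `ω u` η-skew. -/
def ConnForm (ω : V4 → V4 → V4) : Prop :=
  (∀ u u', ω (u + u') = ω u + ω u') ∧ (∀ (c : ℝ) (u : V4), ω (c • u) = c • ω u) ∧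
  (∀ u, IsLin (ω u)) ∧ (∀ u, IsSkew (ω u))

/-- `ω` is adapted to `v`: `Dωv(u) = dv(u) + ω(u)v = 0` for all `u`. -/
def Adapted (v : V4) (dv : V4 → V4) (ω : V4 → V4 → V4) : Prop :=
  ∀ u, dv u + ω u v = 0

/-- `ω` is semi-teleparallel w.r.t. the frame `{v, b₁, b₂, b₃}`:
adapted to `v` and `Dωbᵢ(v) = dbᵢ(v) + ω(v)bᵢ = 0`. -/
def SemiTeleparallel (v : V4) (dv : V4 → V4) (b : Fin 3 → V4) (db : Fin 3 → V4 → V4)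
    (ω : V4 → V4 → V4) : Prop :=
  Adapted v dv ω ∧ ∀ i, db i v + ω v (b i) = 0

/-- The pair `(ωˢ, F)` decomposes the adapted connection `ωᴳ`: `ωˢ` is a semi-teleparallel
connection form, `F : V → End V` is linear, each `F u` is η-skew, `F(u)v = 0`,
`F(bᵢ) = 0`, and `ωᴳ = ωˢ + F`. -/
def GoodPairST (v : V4) (dv : V4 → V4) (b : Fin 3 → V4) (db : Fin 3 → V4 → V4)
    (ωG : V4 → V4 → V4) (p : (V4 → V4 → V4) × (V4 → V4 → V4)) : Prop :=
  ConnForm p.1 ∧ SemiTeleparallel v dv b db p.1 ∧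
  (∀ u u', p.2 (u + u') = p.2 u + p.2 u') ∧
  (∀ (c : ℝ) (u : V4), p.2 (c • u) = c • p.2 u) ∧
  (∀ u, IsLin (p.2 u)) ∧ (∀ u, IsSkew (p.2 u)) ∧
  (∀ u, p.2 u v = 0) ∧ (∀ i, ∀ x, p.2 (b i) x = 0) ∧
  (∀ u x, ωG u x = p.1 u x + p.2 u x)

lemma eta_symm (x y : V4) : eta x y = eta y x := by unfold eta; ring
lemma eta_add_right (x y z : V4) : eta x (y + z) = eta x y + eta x z := by
  simp only [eta, Pi.add_apply]; ring
lemma eta_smul_right (c : ℝ) (x y : V4) : eta x (c • y) = c * eta x y := by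
  simp only [eta, Pi.smul_apply, smul_eq_mul]; ring
lemma eta_add_left (x y z : V4) : eta (x + y) z = eta x z + eta y z := by
  rw [eta_symm, eta_add_right, eta_symm z x, eta_symm z y]
lemma eta_smul_left (c : ℝ) (x y : V4) : eta (c • x) y = c * eta x y := by
  rw [eta_symm, eta_smul_right, eta_symm]
lemma eta_zero_right (x : V4) : eta x 0 = 0 := by simp [eta]
lemma eta_neg_left (x y : V4) : eta (-x) y = -(eta x y) := by
  rw [show -x = (-1 : ℝ) • x by simp, eta_smul_left]; ring
lemma eta_sub_left (x y z : V4) : eta (x - y) z = eta x z - eta y z := by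
  rw [sub_eq_add_neg, eta_add_left, eta_neg_left]; ring
lemma eta_sub_right (x y z : V4) : eta x (y - z) = eta x y - eta x z := by
  rw [eta_symm, eta_sub_left, eta_symm y x, eta_symm z x]
lemma eta_sum_right {n : ℕ} (x : V4) (f : Fin n → V4) :
    eta x (∑ i, f i) = ∑ i, eta x (f i) :=
  map_sum (AddMonoidHom.mk' (eta x) (eta_add_right x)) f Finset.univ
lemma eta_sum_left {n : ℕ} (f : Fin n → V4) (x : V4) :
    eta (∑ i, f i) x = ∑ i, eta (f i) x := by
  rw [eta_symm, eta_sum_right]; exact Finset.sum_congr rfl fun i _ => eta_symm x (f i)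
lemma add_map_sum {M : Type*} [AddCommGroup M] {F : V4 → M}
    (h : ∀ u u', F (u + u') = F u + F u') {n : ℕ} (g : Fin n → V4) :
    F (∑ i, g i) = ∑ i, F (g i) := map_sum (AddMonoidHom.mk' F h) g Finset.univ

lemma decomp (v : V4) (hv : eta v v = -1) (b : Fin 3 → V4)
    (hb : ∀ i j, eta (b i) (b j) = if i = j then 1 else 0)
    (hvb : ∀ i, eta v (b i) = 0) (x : V4) :
    x = (-(eta v x)) • v + ∑ j, eta (b j) x • b j := by
  set g : Fin 4 → V4 := Fin.cons v b with hg
  have li : LinearIndependent ℝ g := by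
    rw [Fintype.linearIndependent_iff]
    intro c hc
    have key : ∀ w : V4, (∑ i, c i * eta w (g i)) = 0 := by
      intro w
      have : eta w (∑ i, c i • g i) = 0 := by rw [hc, eta_zero_right]
      rw [eta_sum_right] at this
      simpa [eta_smul_right] using this
    intro i
    induction i using Fin.cases with
    | zero =>
        have h0 := key v
        simp [Fin.sum_univ_succ, hg, hv, hvb] at h0
        linarith
    | succ j =>
        have h0 := key (b j)
        have hbv : eta (b j) v = 0 := by rw [eta_symm]; exact hvb j
        simp [Fin.sum_univ_succ, hg, hbv, hb, mul_ite] at h0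
        convert h0 using 1
  have card : Fintype.card (Fin 4) = Module.finrank ℝ V4 := by
    simp [Module.finrank_fin_fun]
  let B := basisOfLinearIndependentOfCardEqFinrank li card
  have hB : ⇑B = g := coe_basisOfLinearIndependentOfCardEqFinrank li card
  have hx : ∑ i, B.repr x i • g i = x := by rw [← hB]; exact B.sum_repr x
  set c : Fin 4 → ℝ := fun i => B.repr x i with hcdef
  have hx2 : x = c 0 • v + ∑ j : Fin 3, c j.succ • b j := by
    rw [← hx, Fin.sum_univ_succ]; simp [hg]; rfl
  have h0 : eta v x = -(c 0) := by
    rw [hx2, eta_add_right, eta_smul_right, eta_sum_right, hv]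
    simp [eta_smul_right, hvb]
  have hbj : ∀ j : Fin 3, eta (b j) x = c j.succ := by
    intro j
    have hbv : eta (b j) v = 0 := by rw [eta_symm]; exact hvb j
    rw [hx2, eta_add_right, eta_smul_right, eta_sum_right, hbv]
    simp [eta_smul_right, hb, mul_ite]
  rw [h0, neg_neg]
  rw [show (∑ j, eta (b j) x • b j) = ∑ j, c j.succ • b j from
    Finset.sum_congr rfl fun j _ => by rw [hbj]]
  exact hx2


/-- Every connection form `ωᴳ` adapted to `v` decomposes uniquely as
`ωᴳ = ωˢ + F` with `ωˢ` semi-teleparallel w.r.t. `{v, b₁, b₂, b₃}` and `F` as above;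
moreover `F(u)x = η(v,u)·Σᵢ η(Dᴳbᵢ(v),x)·bᵢ`, where `Dᴳbᵢ(v) = dbᵢ(v) + ωᴳ(v)bᵢ`. -/
theorem statement3 (v : V4) (hv : eta v v = -1)
    (dv : V4 → V4) (hdvlin : IsLin dv) (hdvorth : ∀ u, eta v (dv u) = 0)
    (b : Fin 3 → V4) (hb : ∀ i j, eta (b i) (b j) = if i = j then 1 else 0)
    (hvb : ∀ i, eta v (b i) = 0)
    (db : Fin 3 → V4 → V4) (hdblin : ∀ i, IsLin (db i))
    (hcompat1 : ∀ i u, eta v (db i u) + eta (b i) (dv u) = 0)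
    (hcompat2 : ∀ i j u, eta (b i) (db j u) + eta (b j) (db i u) = 0)
    (ωG : V4 → V4 → V4) (hωG : ConnForm ωG) (hadapted : Adapted v dv ωG) :
    (∃! p : (V4 → V4 → V4) × (V4 → V4 → V4), GoodPairST v dv b db ωG p) ∧
    (∀ p : (V4 → V4 → V4) × (V4 → V4 → V4), GoodPairST v dv b db ωG p →
      ∀ u x, p.2 u x = eta v u • ∑ i : Fin 3, eta (db i v + ωG v (b i)) x • b i) := by
  obtain ⟨hωGadd, hωGsmul, hωGlin, hωGskew⟩ := hωG
  set D : Fin 3 → V4 := fun i => db i v + ωG v (b i) with hDdef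
  have hDi : ∀ i, D i = db i v + ωG v (b i) := fun i => rfl
  -- η(v, D i) = 0
  have hvD : ∀ i, eta v (D i) = 0 := by
    intro i
    have h1 := hcompat1 i v
    have h2 : ωG v v = -(dv v) := eq_neg_of_add_eq_zero_right (hadapted v)
    have h3 : eta (ωG v v) (b i) = -(eta v (ωG v (b i))) := hωGskew v v (b i)
    rw [h2, eta_neg_left] at h3
    have h4 : eta (dv v) (b i) = eta (b i) (dv v) := eta_symm _ _
    rw [hDi, eta_add_right]
    linarith
  -- antisymmetry
  have hanti : ∀ i j, eta (b i) (D j) = -(eta (b j) (D i)) := by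
    intro i j
    have h1 := hcompat2 i j v
    have h2 : eta (ωG v (b i)) (b j) = -(eta (b i) (ωG v (b j))) := hωGskew v (b i) (b j)
    have h3 : eta (b j) (ωG v (b i)) = eta (ωG v (b i)) (b j) := eta_symm _ _
    rw [hDi, hDi, eta_add_right, eta_add_right]
    linarith
  -- D i in the span of the b's
  have hDspan : ∀ i, D i = ∑ j, eta (b j) (D i) • b j := by
    intro i
    have h := decomp v hv b hb hvb (D i)
    rw [hvD i] at h
    simpa using h
  have hDx : ∀ i x, eta (D i) x = ∑ j, eta (b j) (D i) * eta (b j) x := by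
    intro i x
    conv_lhs => rw [hDspan i]
    rw [eta_sum_left]
    exact Finset.sum_congr rfl fun j _ => eta_smul_left _ _ _
  -- key antisymmetric-sum identities
  have hkey : ∀ x y, (∑ i, eta (D i) x * eta (b i) y) + (∑ i, eta (D i) y * eta (b i) x) = 0 := by
    intro x y
    have e1 : (∑ i, eta (D i) x * eta (b i) y)
        = ∑ i, ∑ j, eta (b j) (D i) * eta (b j) x * eta (b i) y :=
      Finset.sum_congr rfl fun i _ => by rw [hDx, Finset.sum_mul]
    have e2 : (∑ i, eta (D i) y * eta (b i) x)
        = ∑ i, ∑ j, eta (b i) (D j) * eta (b i) y * eta (b j) x := by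
      rw [show (∑ i, eta (D i) y * eta (b i) x)
          = ∑ i, ∑ j, eta (b j) (D i) * eta (b j) y * eta (b i) x from
        Finset.sum_congr rfl fun i _ => by rw [hDx, Finset.sum_mul]]
      exact Finset.sum_comm
    rw [e1, e2, ← Finset.sum_add_distrib]
    refine Finset.sum_eq_zero fun i _ => ?_
    rw [← Finset.sum_add_distrib]
    refine Finset.sum_eq_zero fun j _ => ?_
    rw [hanti i j]; ring
  have hsum0 : ∀ x, (∑ j, eta (b j) x • D j) + (∑ i, eta (D i) x • b i) = 0 := by
    intro x
    have e1 : (∑ j, eta (b j) x • D j)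
        = ∑ j, ∑ k, (eta (b j) x * eta (b k) (D j)) • b k := by
      refine Finset.sum_congr rfl fun j _ => ?_
      conv_lhs => rw [hDspan j]
      rw [Finset.smul_sum]
      exact Finset.sum_congr rfl fun k _ => by rw [smul_smul, mul_comm]
    have e2 : (∑ i, eta (D i) x • b i)
        = ∑ j, ∑ k, (eta (b j) (D k) * eta (b j) x) • b k := by
      rw [show (∑ i, eta (D i) x • b i)
          = ∑ i, ∑ j, (eta (b j) (D i) * eta (b j) x) • b i from
        Finset.sum_congr rfl fun i _ => by rw [hDx, Finset.sum_smul]]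
      exact Finset.sum_comm
    rw [e1, e2, ← Finset.sum_add_distrib]
    refine Finset.sum_eq_zero fun j _ => ?_
    rw [← Finset.sum_add_distrib]
    refine Finset.sum_eq_zero fun k _ => ?_
    rw [hanti j k, ← add_smul,
      show eta (b j) x * eta (b k) (D j) + -(eta (b k) (D j)) * eta (b j) x = 0 from by ring,
      zero_smul]
  -- the explicit F and ωS
  set F : V4 → V4 → V4 := fun u x => eta v u • ∑ i, eta (D i) x • b i with hFdef
  have hFapp : ∀ u x, F u x = eta v u • ∑ i, eta (D i) x • b i := fun u x => rfl
  set ωS : V4 → V4 → V4 := fun u x => ωG u x - F u x with hSdef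
  have hSapp : ∀ u x, ωS u x = ωG u x - F u x := fun u x => rfl
  have hFv : ∀ u, F u v = 0 := by
    intro u
    have h : ∀ i, eta (D i) v = 0 := fun i => by rw [eta_symm]; exact hvD i
    rw [hFapp]
    rw [show (∑ i, eta (D i) v • b i) = 0 from Finset.sum_eq_zero fun i _ => by
      rw [h i, zero_smul]]
    rw [smul_zero]
  have hFvb : ∀ i, F v (b i) = D i := by
    intro i
    calc F v (b i) = (-1 : ℝ) • ∑ j, eta (D j) (b i) • b j := by rw [hFapp, hv]
      _ = ∑ j, eta (b j) (D i) • b j := by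
          rw [Finset.smul_sum]
          refine Finset.sum_congr rfl fun j _ => ?_
          rw [smul_smul, hanti j i, eta_symm (D j) (b i), neg_one_mul]
      _ = D i := (hDspan i).symm
  have hFbi : ∀ i x, F (b i) x = 0 := by
    intro i x
    rw [hFapp, hvb i, zero_smul]
  have hFskew : ∀ u, IsSkew (F u) := by
    intro u x y
    have hx' : eta (F u x) y = eta v u * ∑ i, eta (D i) x * eta (b i) y := by
      rw [hFapp, eta_smul_left, eta_sum_left]
      congr 1
      exact Finset.sum_congr rfl fun i _ => eta_smul_left _ _ _
    have hy' : eta x (F u y) = eta v u * ∑ i, eta (D i) y * eta (b i) x := by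
      rw [eta_symm, hFapp, eta_smul_left, eta_sum_left]
      congr 1
      exact Finset.sum_congr rfl fun i _ => eta_smul_left _ _ _
    rw [hx', hy']
    linear_combination (eta v u) * hkey x y
  have hFaddu : ∀ u u', F (u + u') = F u + F u' := by
    intro u u'; funext x
    simp only [hFapp, Pi.add_apply, eta_add_right, add_smul]
  have hFsmulu : ∀ (c : ℝ) u, F (c • u) = c • F u := by
    intro c u; funext x
    simp only [hFapp, Pi.smul_apply, eta_smul_right, mul_smul]
  have hFlin : ∀ u, IsLin (F u) := by
    intro u
    constructor
    · intro x y
      simp only [hFapp, eta_add_right, add_smul, Finset.sum_add_distrib, smul_add]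
    · intro c x
      simp only [hFapp, eta_smul_right, mul_smul, ← Finset.smul_sum]
      rw [smul_comm]
  -- ωS is a semi-teleparallel connection form
  have hSconn : ConnForm ωS := by
    refine ⟨?_, ?_, ?_, ?_⟩
    · intro u u'; funext x
      have := congrFun (hωGadd u u') x
      have h2 := congrFun (hFaddu u u') x
      simp only [Pi.add_apply] at this h2
      simp only [hSapp, Pi.add_apply, this, h2]; ring_nf
    · intro c u; funext x
      have := congrFun (hωGsmul c u) x
      have h2 := congrFun (hFsmulu c u) x
      simp only [Pi.smul_apply] at this h2
      simp only [hSapp, Pi.smul_apply, this, h2, smul_sub]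
    · intro u
      obtain ⟨ha, hs⟩ := hωGlin u
      obtain ⟨ha', hs'⟩ := hFlin u
      constructor
      · intro x y; simp only [hSapp, ha, ha']; abel
      · intro c x; simp only [hSapp, hs, hs', smul_sub]
    · intro u x y
      have h1 := hωGskew u x y
      have h2 := hFskew u x y
      simp only [hSapp, eta_sub_left, eta_sub_right, h1, h2]
      ring
  have hSadapted : Adapted v dv ωS := by
    intro u
    have : ωS u v = ωG u v := by rw [hSapp, hFv, sub_zero]
    rw [this]; exact hadapted u
  have hSst : SemiTeleparallel v dv b db ωS := by
    refine ⟨hSadapted, fun i => ?_⟩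
    rw [hSapp, hFvb i, hDi]
    abel
  have hgood : GoodPairST v dv b db ωG (ωS, F) := by
    refine ⟨hSconn, hSst, hFaddu, hFsmulu, hFlin, hFskew, hFv, hFbi, ?_⟩
    intro u x
    show ωG u x = ωS u x + F u x
    rw [hSapp]; ring
  -- the formula for any good pair
  have formula : ∀ p : (V4 → V4 → V4) × (V4 → V4 → V4), GoodPairST v dv b db ωG p →
      ∀ u x, p.2 u x = eta v u • ∑ i, eta (D i) x • b i := by
    intro p hp u x
    obtain ⟨hp1conn, ⟨hp1ad, hp1st⟩, hp2add, hp2smul, hp2lin, hp2skew, hp2v, hp2b, hpsum⟩ := hp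
    -- p.2 v (b i) = D i
    have hA : ∀ i, p.2 v (b i) = D i := by
      intro i
      have h1 := hpsum v (b i)
      have h2 : p.1 v (b i) = -(db i v) := eq_neg_of_add_eq_zero_right (hp1st i)
      rw [h2] at h1
      rw [hDi]
      rw [show p.2 v (b i) = ωG v (b i) + db i v from by rw [h1]; abel]
      abel
    -- p.2 v x = ∑ i, eta (b i) x • D i
    have hp2zero : ∀ u, p.2 u 0 = 0 := by
      intro u'
      have := (hp2lin u').2 0 0
      simpa using this
    have hB : ∀ x, p.2 v x = ∑ i, eta (b i) x • D i := by
      intro x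
      conv_lhs => rw [decomp v hv b hb hvb x]
      rw [(hp2lin v).1, (hp2lin v).2, hp2v v, smul_zero,
        add_map_sum (hp2lin v).1, zero_add]
      exact Finset.sum_congr rfl fun i _ => by rw [(hp2lin v).2, hA]
    -- decompose u
    have hC : p.2 u = (-(eta v u)) • p.2 v := by
      conv_lhs => rw [decomp v hv b hb hvb u]
      rw [hp2add, hp2smul, add_map_sum hp2add]
      rw [show (∑ j, p.2 (eta (b j) u • b j)) = 0 from Finset.sum_eq_zero fun j _ => by
        rw [hp2smul]; funext y; simp [hp2b j y]]
      rw [add_zero]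
    have := congrFun hC x
    simp only [Pi.smul_apply] at this
    rw [this, hB]
    have hneg : (∑ j, eta (b j) x • D j) = -(∑ i, eta (D i) x • b i) :=
      eq_neg_of_add_eq_zero_left (hsum0 x)
    rw [hneg, smul_neg, neg_smul, neg_neg]
  refine ⟨⟨(ωS, F), hgood, ?_⟩, formula⟩
  intro q hq
  have hq2 : q.2 = F := by
    funext u x
    rw [formula q hq u x, hFapp]
  have hq1 : q.1 = ωS := by
    funext u x
    have h1 := hq.2.2.2.2.2.2.2.2 u x
    rw [hSapp, ← hq2]
    have : q.1 u x = ωG u x - q.2 u x := by rw [h1]; ring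
    rw [this]
  exact Prod.ext hq1 hq2
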